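/- Assume νˢ ≠ 1 and suppose the transcritical bifurcation relation T₂₆ holds: αˢ·β₁·(1 − νˢ) = β₂·ζˢ. Then the gen-free-2 equilibrium v₆, with coordinates x₁ = −ζˢ/D, x₂ = β₁/β₂ + ζˢ/D, yˢ = (β₁ − β₂)ζˢ/(Dβ₂γˢ), y₁ = 0, y₂ = 0, zˢ = (β₂ − β₁)/(αˢβ₂), z = 0, coincides with the gen-free-1 equilibrium v₂, whose coordinates are x₁ = −ζˢ/D, x₂ = 0, yˢ = −ζˢ(ζˢ + D)/(D²γˢ), y₁ = 0, y₂ = 0, zˢ = 1/αˢ + ζˢ/(αˢD), z = 0. -/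

import Mathlib

theorem T₂₆_v₆_coincides_with_v₂
    (α αs β₁ β₂ μ γs γ₁ γ₂ κ₁ κ₂ ν νs ζs ζ : ℝ)
    (hα : 0 < α) (hαs : 0 < αs) (hβ₁pos : 0 < β₁) (hβ₂pos : 0 < β₂)
    (hμ : 0 < μ) (hγs : 0 < γs) (hγ₁ : 0 < γ₁) (hγ₂ : 0 < γ₂)
    (hκ₁ : 0 < κ₁) (hκ₂ : 0 < κ₂) (hν : 0 < ν) (hνs : 0 < νs)
    (hζs : 0 < ζs) (hζ : 0 < ζ)
    (hνs1 : νs ≠ 1)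
    (D : ℝ) (hD : D = αs * (νs - 1))
    (hT : αs * β₁ * (1 - νs) = β₂ * ζs) :
    ((-ζs / D : ℝ), (β₁ / β₂ + ζs / D : ℝ), ((β₁ - β₂) * ζs / (D * β₂ * γs) : ℝ),
        (0 : ℝ), (0 : ℝ), ((β₂ - β₁) / (αs * β₂) : ℝ), (0 : ℝ)) =
      ((-ζs / D : ℝ), (0 : ℝ), (-(ζs * (ζs + D)) / (D ^ 2 * γs) : ℝ),
        (0 : ℝ), (0 : ℝ), (1 / αs + ζs / (αs * D) : ℝ), (0 : ℝ)) := by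
  have hDne : D ≠ 0 := by
    rw [hD]
    exact mul_ne_zero hαs.ne' (sub_ne_zero.mpr hνs1)
  have hkey : β₁ * D = -(β₂ * ζs) := by
    rw [hD]; nlinarith [hT]
  refine Prod.ext rfl (Prod.ext ?_ (Prod.ext ?_ (Prod.ext rfl (Prod.ext rfl (Prod.ext ?_ rfl)))))
  · simp only
    field_simp
    linarith [hkey]
  · simp only
    field_simp
    linear_combination hkey
  · simp only
    field_simp
    linear_combination -hkey
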